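/- arXiv:2601.01824 — 3 statements merged into one kernel-verified Lean document; each statement's English description precedes it below -/
import Mathlib

section
/- Let j ≥ 2 and f = x^j y^j + y^j z^j + x^j z^j, defining a curve C_j in the complex projective plane. The only singular points of C_j are (0:0:1), (0:1:0), (1:0:0), and the total Tjurina number of C_j equals 3(j-1)^2. -/
open MvPolynomial

private noncomputable def eAux (a : ℕ) :
    {m : Fin 2 →₀ ℕ // m ∈ ({m : Fin 2 →₀ ℕ | a ≤ m 0 ∨ a ≤ m 1} : Set _)ᶜ} ≃ Fin a × Fin a where
  toFun m := ⟨⟨m.1 0, by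
      have := m.2
      simp only [Set.mem_compl_iff, Set.mem_setOf_eq, not_or, not_le] at this
      exact this.1⟩,
    ⟨m.1 1, by
      have := m.2
      simp only [Set.mem_compl_iff, Set.mem_setOf_eq, not_or, not_le] at this
      exact this.2⟩⟩
  invFun p := ⟨Finsupp.equivFunOnFinite.symm ![p.1.1, p.2.1], by
    simp only [Set.mem_compl_iff, Set.mem_setOf_eq, not_or, not_le,
      Finsupp.coe_equivFunOnFinite_symm]
    exact ⟨p.1.2, p.2.2⟩⟩
  left_inv m := by
    apply Subtype.ext
    apply Finsupp.ext
    intro i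
    fin_cases i <;> simp
  right_inv p := by
    apply Prod.ext <;> apply Fin.ext <;> simp

private lemma dimAux (a : ℕ) :
    Module.finrank ℂ (MvPolynomial (Fin 2) ℂ ⧸
      Ideal.span {(X 0 : MvPolynomial (Fin 2) ℂ) ^ a, X 1 ^ a}) = a ^ 2 := by
  set S : Set (Fin 2 →₀ ℕ) := {m : Fin 2 →₀ ℕ | a ≤ m 0 ∨ a ≤ m 1} with hS
  have hI : (Ideal.span {(X 0 : MvPolynomial (Fin 2) ℂ) ^ a, X 1 ^ a}).restrictScalars ℂ
      = restrictSupport ℂ S := by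
    ext p
    rw [Submodule.restrictScalars_mem, mem_restrictSupport_iff]
    have h1 : ({(X 0 : MvPolynomial (Fin 2) ℂ) ^ a, X 1 ^ a} : Set _) =
        (fun s => monomial s (1 : ℂ)) '' {Finsupp.single 0 a, Finsupp.single 1 a} := by
      rw [Set.image_pair]
      simp [X_pow_eq_monomial]
    rw [h1, mem_ideal_span_monomial_image]
    constructor
    · intro h m hm
      obtain ⟨si, hsi, hle⟩ := h m hm
      rcases hsi with rfl | rfl
      · exact Or.inl (by simpa using hle 0)
      · exact Or.inr (by simpa using hle 1)
    · intro h m hm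
      rcases h hm with h' | h'
      · exact ⟨Finsupp.single 0 a, Or.inl rfl, by rwa [Finsupp.single_le_iff]⟩
      · exact ⟨Finsupp.single 1 a, Or.inr rfl, by rwa [Finsupp.single_le_iff]⟩
  have hcompl : IsCompl (restrictSupport ℂ S) (restrictSupport ℂ Sᶜ) := by
    constructor
    · rw [Submodule.disjoint_def]
      intro x h1 h2
      rw [mem_restrictSupport_iff] at h1 h2
      have : (↑x.support : Set (Fin 2 →₀ ℕ)) ⊆ ∅ := fun m hm => h2 hm (h1 hm)
      exact support_eq_empty.mp (Finset.coe_eq_empty.mp (Set.subset_empty_iff.mp this))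
    · rw [codisjoint_iff, restrictSupport_eq_span, restrictSupport_eq_span, ← Submodule.span_union,
        ← Set.image_union, Set.union_compl_self, ← restrictSupport_eq_span, restrictSupport_univ]
  haveI : Fintype ↥(Sᶜ) := Fintype.ofEquiv _ (eAux a).symm
  calc Module.finrank ℂ (MvPolynomial (Fin 2) ℂ ⧸
        Ideal.span {(X 0 : MvPolynomial (Fin 2) ℂ) ^ a, X 1 ^ a})
      = Module.finrank ℂ (MvPolynomial (Fin 2) ℂ ⧸
          (Ideal.span {(X 0 : MvPolynomial (Fin 2) ℂ) ^ a, X 1 ^ a}).restrictScalars ℂ) :=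
        (Submodule.Quotient.restrictScalarsEquiv ℂ
          (Ideal.span {(X 0 : MvPolynomial (Fin 2) ℂ) ^ a, X 1 ^ a})).finrank_eq.symm
    _ = Module.finrank ℂ ↥(restrictSupport ℂ Sᶜ) := by
        rw [hI]
        exact (Submodule.quotientEquivOfIsCompl _ _ hcompl).finrank_eq
    _ = Module.finrank ℂ (↥(Sᶜ) →₀ ℂ) := (basisRestrictSupport ℂ Sᶜ).repr.finrank_eq
    _ = Fintype.card ↥(Sᶜ) := Module.finrank_finsupp_self ℂ
    _ = a ^ 2 := by rw [Fintype.card_congr (eAux a), Fintype.card_prod, Fintype.card_fin, sq]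

private lemma pd0 (k : ℕ) :
    pderiv 0 ((X 0 : MvPolynomial (Fin 2) ℂ) ^ (k+2) * X 1 ^ (k+2) + X 1 ^ (k+2) + X 0 ^ (k+2))
      = C ((k:ℂ)+2) * (X 0 ^ (k+1) * X 1 ^ (k+2) + X 0 ^ (k+1)) := by
  have hC : (C ((k:ℂ)+2) : MvPolynomial (Fin 2) ℂ) = (k:MvPolynomial (Fin 2) ℂ) + 2 := by
    simp [map_add, map_natCast, map_ofNat]
  rw [hC]
  simp [pderiv_mul, pderiv_pow, pderiv_X_self, pderiv_X_of_ne (show (1:Fin 2) ≠ 0 by decide)]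
  ring

private lemma pd1 (k : ℕ) :
    pderiv 1 ((X 0 : MvPolynomial (Fin 2) ℂ) ^ (k+2) * X 1 ^ (k+2) + X 1 ^ (k+2) + X 0 ^ (k+2))
      = C ((k:ℂ)+2) * (X 1 ^ (k+1) * X 0 ^ (k+2) + X 1 ^ (k+1)) := by
  have hC : (C ((k:ℂ)+2) : MvPolynomial (Fin 2) ℂ) = (k:MvPolynomial (Fin 2) ℂ) + 2 := by
    simp [map_add, map_natCast, map_ofNat]
  rw [hC]
  simp [pderiv_mul, pderiv_pow, pderiv_X_self, pderiv_X_of_ne (show (0:Fin 2) ≠ 1 by decide)]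
  ring

private lemma spanAux (k : ℕ) :
    Ideal.span {(X 0 : MvPolynomial (Fin 2) ℂ) ^ (k+2) * X 1 ^ (k+2) + X 1 ^ (k+2) + X 0 ^ (k+2),
      pderiv 0 ((X 0 : MvPolynomial (Fin 2) ℂ) ^ (k+2) * X 1 ^ (k+2) + X 1 ^ (k+2) + X 0 ^ (k+2)),
      pderiv 1 ((X 0 : MvPolynomial (Fin 2) ℂ) ^ (k+2) * X 1 ^ (k+2) + X 1 ^ (k+2) + X 0 ^ (k+2))}
    = Ideal.span {(X 0 : MvPolynomial (Fin 2) ℂ) ^ (k+1), X 1 ^ (k+1)} := by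
  set g : MvPolynomial (Fin 2) ℂ :=
    X 0 ^ (k+2) * X 1 ^ (k+2) + X 1 ^ (k+2) + X 0 ^ (k+2) with hgdef
  have hc : ((k:ℂ)+2) ≠ 0 := by
    have : ((k+2:ℕ):ℂ) ≠ 0 := Nat.cast_ne_zero.mpr (by omega)
    push_cast at this
    exact this
  apply le_antisymm
  · rw [Ideal.span_le]
    rintro x (rfl | rfl | rfl)
    · rw [SetLike.mem_coe, Ideal.mem_span_pair]
      exact ⟨X 0 * X 1 ^ (k+2) + X 0, X 1, by rw [hgdef]; ring⟩
    · rw [SetLike.mem_coe, Ideal.mem_span_pair, pd0]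
      exact ⟨C ((k:ℂ)+2) * (X 1 ^ (k+2) + 1), 0, by ring⟩
    · rw [SetLike.mem_coe, Ideal.mem_span_pair, pd1]
      exact ⟨0, C ((k:ℂ)+2) * (X 0 ^ (k+2) + 1), by ring⟩
  · set I := Ideal.span {g, pderiv 0 g, pderiv 1 g} with hI
    have hg : g ∈ I := Ideal.subset_span (by simp)
    have hd0 : pderiv 0 g ∈ I := Ideal.subset_span (by simp)
    have hd1 : pderiv 1 g ∈ I := Ideal.subset_span (by simp)
    have ha : (X 0 : MvPolynomial (Fin 2) ℂ) ^ (k+1) * X 1 ^ (k+2) + X 0 ^ (k+1) ∈ I := by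
      have h := I.mul_mem_left (C ((k:ℂ)+2)⁻¹) hd0
      rw [hgdef, pd0, ← mul_assoc, ← C_mul, inv_mul_cancel₀ hc, C_1, one_mul] at h
      exact h
    have hb : (X 1 : MvPolynomial (Fin 2) ℂ) ^ (k+1) * X 0 ^ (k+2) + X 1 ^ (k+1) ∈ I := by
      have h := I.mul_mem_left (C ((k:ℂ)+2)⁻¹) hd1
      rw [hgdef, pd1, ← mul_assoc, ← C_mul, inv_mul_cancel₀ hc, C_1, one_mul] at h
      exact h
    have hx1 : (X 1 : MvPolynomial (Fin 2) ℂ) ^ (k+2) ∈ I := by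
      have h := I.sub_mem hg (I.mul_mem_left (X 0) ha)
      have e : g - X 0 * (X 0 ^ (k+1) * X 1 ^ (k+2) + X 0 ^ (k+1))
          = (X 1 : MvPolynomial (Fin 2) ℂ) ^ (k+2) := by rw [hgdef]; ring
      rwa [e] at h
    have hx0 : (X 0 : MvPolynomial (Fin 2) ℂ) ^ (k+2) ∈ I := by
      have h := I.sub_mem hg (I.mul_mem_left (X 1) hb)
      have e : g - X 1 * (X 1 ^ (k+1) * X 0 ^ (k+2) + X 1 ^ (k+1))
          = (X 0 : MvPolynomial (Fin 2) ℂ) ^ (k+2) := by rw [hgdef]; ring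
      rwa [e] at h
    have hX0 : (X 0 : MvPolynomial (Fin 2) ℂ) ^ (k+1) ∈ I := by
      have h := I.sub_mem ha (I.mul_mem_left (X 0 ^ (k+1)) hx1)
      have e : (X 0 : MvPolynomial (Fin 2) ℂ) ^ (k+1) * X 1 ^ (k+2) + X 0 ^ (k+1)
          - X 0 ^ (k+1) * X 1 ^ (k+2) = X 0 ^ (k+1) := by ring
      rwa [e] at h
    have hX1 : (X 1 : MvPolynomial (Fin 2) ℂ) ^ (k+1) ∈ I := by
      have h := I.sub_mem hb (I.mul_mem_left (X 1 ^ (k+1)) hx0)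
      have e : (X 1 : MvPolynomial (Fin 2) ℂ) ^ (k+1) * X 0 ^ (k+2) + X 1 ^ (k+1)
          - X 1 ^ (k+1) * X 0 ^ (k+2) = X 1 ^ (k+1) := by ring
      rwa [e] at h
    rw [Ideal.span_le]
    rintro x (rfl | rfl)
    · exact hX0
    · exact hX1

private lemma ev0 (k : ℕ) (v : Fin 3 → ℂ) :
    eval v (pderiv 0 ((X 0 : MvPolynomial (Fin 3) ℂ) ^ (k+2) * X 1 ^ (k+2)
      + X 1 ^ (k+2) * X 2 ^ (k+2) + X 0 ^ (k+2) * X 2 ^ (k+2)))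
    = ((k:ℂ)+2) * (v 0 ^ (k+1) * (v 1 ^ (k+2) + v 2 ^ (k+2))) := by
  simp [pderiv_mul, pderiv_pow, pderiv_X_self,
    pderiv_X_of_ne (show (1:Fin 3) ≠ 0 by decide),
    pderiv_X_of_ne (show (2:Fin 3) ≠ 0 by decide)]
  ring

private lemma ev1 (k : ℕ) (v : Fin 3 → ℂ) :
    eval v (pderiv 1 ((X 0 : MvPolynomial (Fin 3) ℂ) ^ (k+2) * X 1 ^ (k+2)
      + X 1 ^ (k+2) * X 2 ^ (k+2) + X 0 ^ (k+2) * X 2 ^ (k+2)))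
    = ((k:ℂ)+2) * (v 1 ^ (k+1) * (v 0 ^ (k+2) + v 2 ^ (k+2))) := by
  simp [pderiv_mul, pderiv_pow, pderiv_X_self,
    pderiv_X_of_ne (show (0:Fin 3) ≠ 1 by decide),
    pderiv_X_of_ne (show (2:Fin 3) ≠ 1 by decide)]
  ring

private lemma ev2 (k : ℕ) (v : Fin 3 → ℂ) :
    eval v (pderiv 2 ((X 0 : MvPolynomial (Fin 3) ℂ) ^ (k+2) * X 1 ^ (k+2)
      + X 1 ^ (k+2) * X 2 ^ (k+2) + X 0 ^ (k+2) * X 2 ^ (k+2)))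
    = ((k:ℂ)+2) * (v 2 ^ (k+1) * (v 0 ^ (k+2) + v 1 ^ (k+2))) := by
  simp [pderiv_mul, pderiv_pow, pderiv_X_self,
    pderiv_X_of_ne (show (0:Fin 3) ≠ 2 by decide),
    pderiv_X_of_ne (show (1:Fin 3) ≠ 2 by decide)]
  ring

private lemma two_zero (k : ℕ) {a b c : ℂ}
    (h0 : a = 0 ∨ b^(k+2) + c^(k+2) = 0)
    (h1 : b = 0 ∨ a^(k+2) + c^(k+2) = 0)
    (h2 : c = 0 ∨ a^(k+2) + b^(k+2) = 0) :
    (a = 0 ∧ b = 0) ∨ (a = 0 ∧ c = 0) ∨ (b = 0 ∧ c = 0) := by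
  have hp : k + 2 ≠ 0 := by omega
  rcases h0 with ha | h0
  · rcases h1 with hb | h1
    · exact Or.inl ⟨ha, hb⟩
    · have hc : c = 0 := by
        rw [← pow_eq_zero_iff hp]
        rw [ha] at h1
        simpa using h1
      exact Or.inr (Or.inl ⟨ha, hc⟩)
  · rcases h1 with hb | h1
    · have hc : c = 0 := by
        rw [← pow_eq_zero_iff hp]
        rw [hb] at h0
        simpa using h0
      exact Or.inr (Or.inr ⟨hb, hc⟩)
    · rcases h2 with hc | h2
      · have hb : b = 0 := by
          rw [← pow_eq_zero_iff hp]
          rw [hc] at h0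
          simpa using h0
        exact Or.inr (Or.inr ⟨hb, hc⟩)
      · have hc : c = 0 := by
          rw [← pow_eq_zero_iff hp]
          have h3 : (2:ℂ) * c^(k+2) = 0 := by linear_combination h0 + h1 - h2
          simpa using h3
        have hb : b = 0 := by
          rw [← pow_eq_zero_iff hp]
          rw [hc] at h0
          simpa using h0
        exact Or.inr (Or.inr ⟨hb, hc⟩)

/-- For `j ≥ 2`, the curve `C_j : x^j y^j + y^j z^j + x^j z^j = 0` in `ℙ²(ℂ)` has exactly
the three coordinate points as singular points, and its total Tjurina number is `3(j-1)^2`,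
computed as the sum of the local Tjurina numbers in the three affine charts. -/
theorem stmt3 (j : ℕ) (hj : 2 ≤ j)
    (f : MvPolynomial (Fin 3) ℂ)
    (hf : f = X 0 ^ j * X 1 ^ j + X 1 ^ j * X 2 ^ j + X 0 ^ j * X 2 ^ j)
    -- local (dehomogenized) equations in the charts z = 1, y = 1, x = 1
    (g₁ g₂ g₃ : MvPolynomial (Fin 2) ℂ)
    (hg₁ : g₁ = aeval ![X 0, X 1, 1] f)
    (hg₂ : g₂ = aeval ![X 0, 1, X 1] f)
    (hg₃ : g₃ = aeval ![1, X 0, X 1] f) :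
    -- the singular points are exactly (0:0:1), (0:1:0) and (1:0:0)
    ({v : Fin 3 → ℂ | v ≠ 0 ∧ ∀ i : Fin 3, eval v (pderiv i f) = 0} =
      {v : Fin 3 → ℂ | v ≠ 0 ∧ ∃ t : ℂ,
        v = t • ![0, 0, 1] ∨ v = t • ![0, 1, 0] ∨ v = t • ![1, 0, 0]}) ∧
    -- the total Tjurina number equals 3(j-1)^2
    Module.finrank ℂ (MvPolynomial (Fin 2) ℂ ⧸
        Ideal.span {g₁, pderiv 0 g₁, pderiv 1 g₁}) +
      Module.finrank ℂ (MvPolynomial (Fin 2) ℂ ⧸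
        Ideal.span {g₂, pderiv 0 g₂, pderiv 1 g₂}) +
      Module.finrank ℂ (MvPolynomial (Fin 2) ℂ ⧸
        Ideal.span {g₃, pderiv 0 g₃, pderiv 1 g₃})
      = 3 * (j - 1) ^ 2 := by
  obtain ⟨k, rfl⟩ : ∃ k, j = k + 2 := ⟨j - 2, by omega⟩
  subst hf
  have hc : ((k:ℂ)+2) ≠ 0 := by
    have : ((k+2:ℕ):ℂ) ≠ 0 := Nat.cast_ne_zero.mpr (by omega)
    push_cast at this
    exact this
  constructor
  · ext v
    simp only [Set.mem_setOf_eq]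
    constructor
    · rintro ⟨hv, h⟩
      refine ⟨hv, ?_⟩
      have h0 := h 0
      have h1 := h 1
      have h2 := h 2
      rw [ev0] at h0
      rw [ev1] at h1
      rw [ev2] at h2
      have hp : k + 1 ≠ 0 := by omega
      have d0 : v 0 = 0 ∨ v 1 ^ (k+2) + v 2 ^ (k+2) = 0 := by
        rcases mul_eq_zero.mp h0 with h' | h'
        · exact absurd h' hc
        · rcases mul_eq_zero.mp h' with h'' | h''
          · exact Or.inl (pow_eq_zero_iff hp |>.mp h'')
          · exact Or.inr h''
      have d1 : v 1 = 0 ∨ v 0 ^ (k+2) + v 2 ^ (k+2) = 0 := by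
        rcases mul_eq_zero.mp h1 with h' | h'
        · exact absurd h' hc
        · rcases mul_eq_zero.mp h' with h'' | h''
          · exact Or.inl (pow_eq_zero_iff hp |>.mp h'')
          · exact Or.inr h''
      have d2 : v 2 = 0 ∨ v 0 ^ (k+2) + v 1 ^ (k+2) = 0 := by
        rcases mul_eq_zero.mp h2 with h' | h'
        · exact absurd h' hc
        · rcases mul_eq_zero.mp h' with h'' | h''
          · exact Or.inl (pow_eq_zero_iff hp |>.mp h'')
          · exact Or.inr h''
      rcases two_zero k d0 d1 d2 with ⟨e0, e1⟩ | ⟨e0, e2⟩ | ⟨e1, e2⟩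
      · exact ⟨v 2, Or.inl (by funext i; fin_cases i <;> simp [e0, e1])⟩
      · exact ⟨v 1, Or.inr (Or.inl (by funext i; fin_cases i <;> simp [e0, e2]))⟩
      · exact ⟨v 0, Or.inr (Or.inr (by funext i; fin_cases i <;> simp [e1, e2]))⟩
    · rintro ⟨hv, t, (rfl | rfl | rfl)⟩ <;> refine ⟨hv, ?_⟩ <;> intro i <;> fin_cases i
      · exact (ev0 k _).trans (by
          simp [zero_pow (show k+1 ≠ 0 by omega), zero_pow (show k+2 ≠ 0 by omega)])
      · exact (ev1 k _).trans (by
          simp [zero_pow (show k+1 ≠ 0 by omega), zero_pow (show k+2 ≠ 0 by omega)])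
      · exact (ev2 k _).trans (by
          simp [zero_pow (show k+1 ≠ 0 by omega), zero_pow (show k+2 ≠ 0 by omega)])
      · exact (ev0 k _).trans (by
          simp [zero_pow (show k+1 ≠ 0 by omega), zero_pow (show k+2 ≠ 0 by omega)])
      · exact (ev1 k _).trans (by
          simp [zero_pow (show k+1 ≠ 0 by omega), zero_pow (show k+2 ≠ 0 by omega)])
      · exact (ev2 k _).trans (by
          simp [zero_pow (show k+1 ≠ 0 by omega), zero_pow (show k+2 ≠ 0 by omega)])
      · exact (ev0 k _).trans (by
          simp [zero_pow (show k+1 ≠ 0 by omega), zero_pow (show k+2 ≠ 0 by omega)])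
      · exact (ev1 k _).trans (by
          simp [zero_pow (show k+1 ≠ 0 by omega), zero_pow (show k+2 ≠ 0 by omega)])
      · exact (ev2 k _).trans (by
          simp [zero_pow (show k+1 ≠ 0 by omega), zero_pow (show k+2 ≠ 0 by omega)])
  · have e1 : g₁ = (X 0 : MvPolynomial (Fin 2) ℂ) ^ (k+2) * X 1 ^ (k+2)
        + X 1 ^ (k+2) + X 0 ^ (k+2) := by
      rw [hg₁]
      simp
      try ring
    have e2 : g₂ = (X 0 : MvPolynomial (Fin 2) ℂ) ^ (k+2) * X 1 ^ (k+2)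
        + X 1 ^ (k+2) + X 0 ^ (k+2) := by
      rw [hg₂]
      simp
      try ring
    have e3 : g₃ = (X 0 : MvPolynomial (Fin 2) ℂ) ^ (k+2) * X 1 ^ (k+2)
        + X 1 ^ (k+2) + X 0 ^ (k+2) := by
      rw [hg₃]
      simp
      try ring
    rw [e1, e2, e3, spanAux k, dimAux (k+1)]
    have : k + 2 - 1 = k + 1 := by omega
    rw [this]
    ring
end

section
/- Let f = x^5 + y^5 + y z (x^3 + y^2 z) ∈ C[x,y,z]. Then the curve C: f = 0 in P^2(C) is irreducible. -/
open MvPolynomial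

/-- `X 0` is prime in `ℂ[x₀,x₁]`. -/
lemma stmt14_prime_X0 : Prime (X (0 : Fin 2) : MvPolynomial (Fin 2) ℂ) := by
  have h : ((MvPolynomial.finSuccEquiv ℂ 1) (X (0 : Fin 2))) = Polynomial.X :=
    finSuccEquiv_X_zero
  refine (MulEquiv.prime_iff (MvPolynomial.finSuccEquiv ℂ 1).toMulEquiv).mp ?_
  show Prime ((MvPolynomial.finSuccEquiv ℂ 1) (X 0))
  rw [h]
  exact Polynomial.prime_X

/-- Case `natDegree U = 2` of the no-root lemma. -/
lemma stmt14_aux2 (α : MvPolynomial (Fin 1) ℂ) (hα : α ≠ 0)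
    (U : Polynomial (MvPolynomial (Fin 1) ℂ))
    (h : U ^ 2 + Polynomial.X ^ 3 * U + Polynomial.C α * Polynomial.X ^ 5
        + Polynomial.C (α ^ 6) = 0)
    (hd : U.natDegree = 2) : False := by
  set u2 := U.coeff 2 with hu2
  set u1 := U.coeff 1 with hu1
  set u0 := U.coeff 0 with hu0
  have hU : U = Polynomial.C u2 * Polynomial.X ^ 2 + Polynomial.C u1 * Polynomial.X
      + Polynomial.C u0 := by
    ext n
    match n with
    | 0 => simp [hu0]
    | 1 => simp [hu1]
    | 2 => simp [hu2]
    | (n+3) =>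
      rw [Polynomial.coeff_eq_zero_of_natDegree_lt (by omega)]
      simp [Polynomial.coeff_C]
  rw [hU] at h
  have h' : Polynomial.C (u2 + α) * Polynomial.X ^ 5
      + Polynomial.C (u2 ^ 2 + u1) * Polynomial.X ^ 4
      + Polynomial.C (2 * u2 * u1 + u0) * Polynomial.X ^ 3
      + Polynomial.C (u1 ^ 2 + 2 * u2 * u0) * Polynomial.X ^ 2
      + Polynomial.C (2 * u1 * u0) * Polynomial.X
      + Polynomial.C (u0 ^ 2 + α ^ 6) = 0 := by
    simp only [map_add, map_mul, map_pow, map_ofNat] at h ⊢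
    linear_combination h
  have e5 := congrArg (fun p => Polynomial.coeff p 5) h'
  have e4 := congrArg (fun p => Polynomial.coeff p 4) h'
  have e3 := congrArg (fun p => Polynomial.coeff p 3) h'
  have e2 := congrArg (fun p => Polynomial.coeff p 2) h'
  simp only [Polynomial.coeff_add, Polynomial.coeff_C_mul, Polynomial.coeff_X_pow,
    Polynomial.coeff_C, Polynomial.coeff_X, Polynomial.coeff_zero] at e5 e4 e3 e2
  norm_num at e5 e4 e3 e2
  have h5 : u2 = -α := by linear_combination e5
  rw [h5] at e4
  have h4 : u1 = -α ^ 2 := by linear_combination e4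
  rw [h5, h4] at e3
  have h3 : u0 = -(2 * α ^ 3) := by linear_combination e3
  rw [h5, h4, h3] at e2
  have : (5 : MvPolynomial (Fin 1) ℂ) * α ^ 4 = 0 := by linear_combination e2
  exact (mul_ne_zero (by norm_num) (pow_ne_zero _ hα)) this

/-- No polynomial `U ∈ ℂ[α][Y]` satisfies `U² + Y³U + αY⁵ + α⁶ = 0`. -/
lemma stmt14_aux1 (α : MvPolynomial (Fin 1) ℂ) (hα : α ≠ 0)
    (U : Polynomial (MvPolynomial (Fin 1) ℂ))
    (h : U ^ 2 + Polynomial.X ^ 3 * U + Polynomial.C α * Polynomial.X ^ 5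
        + Polynomial.C (α ^ 6) = 0) : False := by
  have key : U * (U + Polynomial.X ^ 3)
      = -(Polynomial.C α * Polynomial.X ^ 5 + Polynomial.C (α ^ 6)) := by
    linear_combination h
  have hne : (Polynomial.C α * Polynomial.X ^ 5 + Polynomial.C (α ^ 6)
      : Polynomial (MvPolynomial (Fin 1) ℂ)) ≠ 0 := by
    intro hz
    have := congrArg (fun p => Polynomial.coeff p 5) hz
    simp only [Polynomial.coeff_add, Polynomial.coeff_C_mul, Polynomial.coeff_X_pow,
      Polynomial.coeff_C, Polynomial.coeff_zero] at this
    norm_num at this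
    exact hα this
  have hdeg5 : (Polynomial.C α * Polynomial.X ^ 5 + Polynomial.C (α ^ 6)).natDegree = 5 := by
    rw [Polynomial.natDegree_add_C, Polynomial.natDegree_C_mul_X_pow _ _ hα]
  have hU0 : U ≠ 0 := by
    intro hz; rw [hz, zero_mul] at key; exact hne (neg_eq_zero.mp key.symm)
  have hU0' : U + Polynomial.X ^ 3 ≠ 0 := by
    intro hz; rw [hz, mul_zero] at key; exact hne (neg_eq_zero.mp key.symm)
  have hsum : U.natDegree + (U + Polynomial.X ^ 3).natDegree = 5 := by
    have := congrArg Polynomial.natDegree key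
    rwa [Polynomial.natDegree_mul hU0 hU0', Polynomial.natDegree_neg, hdeg5] at this
  set d := U.natDegree with hd
  set e := (U + Polynomial.X ^ 3).natDegree with he
  have hb1 : e ≤ max d 3 := by
    have := Polynomial.natDegree_add_le U (Polynomial.X ^ 3)
    simpa [Polynomial.natDegree_X_pow] using this
  have hb2 : d ≤ max e 3 := by
    have h3 : U = (U + Polynomial.X ^ 3) - Polynomial.X ^ 3 := by ring
    calc d = ((U + Polynomial.X ^ 3) - Polynomial.X ^ 3).natDegree := by rw [← h3]
    _ ≤ max e (Polynomial.X ^ 3 : Polynomial (MvPolynomial (Fin 1) ℂ)).natDegree :=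
        Polynomial.natDegree_sub_le _ _
    _ = max e 3 := by rw [Polynomial.natDegree_X_pow]
  have hcase : d = 2 ∨ d = 3 := by
    rw [max_def] at hb1 hb2; split_ifs at hb1 hb2 <;> omega
  rcases hcase with hd2 | hd3
  · exact stmt14_aux2 α hα U h hd2
  · refine stmt14_aux2 α hα (-(U + Polynomial.X ^ 3)) (by linear_combination h) ?_
    rw [Polynomial.natDegree_neg]
    omega

/-- No polynomial `v ∈ ℂ[x₀,x₁]` satisfies `v² + x₀x₁³v + x₀⁸ + x₀³x₁⁵ = 0`. -/
lemma stmt14_no_root (v : MvPolynomial (Fin 2) ℂ)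
    (h : v ^ 2 + X 0 * X 1 ^ 3 * v + X 0 ^ 8 + X 0 ^ 3 * X 1 ^ 5 = 0) : False := by
  have hP := stmt14_prime_X0
  have hdvd : (X (0 : Fin 2) : MvPolynomial (Fin 2) ℂ) ∣ v := by
    refine hP.dvd_of_dvd_pow (n := 2) ?_
    have hv2 : v ^ 2 = -(X 0 * X 1 ^ 3 * v + X 0 ^ 8 + X 0 ^ 3 * X 1 ^ 5) := by
      linear_combination h
    rw [hv2]
    refine dvd_neg.mpr (dvd_add (dvd_add ⟨X 1 ^ 3 * v, by ring⟩ ⟨X 0 ^ 7, by ring⟩)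
      ⟨X 0 ^ 2 * X 1 ^ 5, by ring⟩)
  obtain ⟨u, rfl⟩ := hdvd
  have hx : (X (0 : Fin 2) : MvPolynomial (Fin 2) ℂ) ^ 2 ≠ 0 :=
    pow_ne_zero _ (MvPolynomial.X_ne_zero 0)
  have h2 : u ^ 2 + X 1 ^ 3 * u + X 0 ^ 6 + X 0 * X 1 ^ 5 = 0 := by
    apply mul_left_cancel₀ hx
    rw [mul_zero]
    linear_combination h
  have h3 := congrArg (rename (Equiv.swap (0 : Fin 2) 1)) h2
  simp only [map_add, map_mul, map_pow, map_zero, rename_X, Equiv.swap_apply_left,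
    Equiv.swap_apply_right] at h3
  have h1 : (X (1 : Fin 2) : MvPolynomial (Fin 2) ℂ) = X (Fin.succ 0) := rfl
  rw [h1] at h3
  have h4 := congrArg (MvPolynomial.finSuccEquiv ℂ 1) h3
  simp only [map_add, map_mul, map_pow, map_zero, finSuccEquiv_X_zero,
    finSuccEquiv_X_succ] at h4
  exact stmt14_aux1 (X 0) (MvPolynomial.X_ne_zero 0)
    ((MvPolynomial.finSuccEquiv ℂ 1) ((rename (Equiv.swap (0 : Fin 2) 1)) u))
    (by rw [map_pow]; linear_combination h4)

/-- The image of `f` under swapping `x ↔ z` and separating off the variable `z`: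
the quadratic `y³ T² + x³y T + (y⁵ + x⁵)` over `ℂ[y,x]`. -/
noncomputable def stmt14_p : Polynomial (MvPolynomial (Fin 2) ℂ) :=
  Polynomial.C ((X 0 : MvPolynomial (Fin 2) ℂ) ^ 3) * Polynomial.X ^ 2 +
    Polynomial.C ((X 0 : MvPolynomial (Fin 2) ℂ) * X 1 ^ 3) * Polynomial.X +
    Polynomial.C ((X 0 : MvPolynomial (Fin 2) ℂ) ^ 5 + X 1 ^ 5)

lemma stmt14_X0_not_dvd_X1 : ¬ (X (0 : Fin 2) : MvPolynomial (Fin 2) ℂ) ∣ X 1 := by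
  intro hdvd
  have := map_dvd (MvPolynomial.eval (fun i => if i = 0 then (0 : ℂ) else 1)) hdvd
  simp only [MvPolynomial.eval_X] at this
  norm_num at this

lemma stmt14_map_irred {K : Type*} [Field K] [Algebra (MvPolynomial (Fin 2) ℂ) K]
    [IsFractionRing (MvPolynomial (Fin 2) ℂ) K] :
    Irreducible (stmt14_p.map (algebraMap (MvPolynomial (Fin 2) ℂ) K)) := by
  haveI : Nonempty (GCDMonoid (MvPolynomial (Fin 2) ℂ)) := by
    letI : NormalizationMonoid (MvPolynomial (Fin 2) ℂ) :=
      UniqueFactorizationMonoid.normalizationMonoid.toNormalizationMonoid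
    exact ⟨(UniqueFactorizationMonoid.toNormalizedGCDMonoid _).toGCDMonoid⟩
  set φ := algebraMap (MvPolynomial (Fin 2) ℂ) K with hφ
  have hinj : Function.Injective φ := IsFractionRing.injective _ _
  have hX0 : (X (0 : Fin 2) : MvPolynomial (Fin 2) ℂ) ≠ 0 := MvPolynomial.X_ne_zero 0
  have hφX0 : φ (X 0) ≠ 0 := fun hz => hX0 (hinj (by rw [hz, map_zero]))
  have hmap : stmt14_p.map φ
      = Polynomial.C (φ (X 0) ^ 3) * Polynomial.X ^ 2
        + Polynomial.C (φ (X 0) * φ (X 1) ^ 3) * Polynomial.X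
        + Polynomial.C (φ (X 0) ^ 5 + φ (X 1) ^ 5) := by
    simp only [stmt14_p, Polynomial.map_add, Polynomial.map_mul, Polynomial.map_pow,
      Polynomial.map_C, Polynomial.map_X, map_add, map_mul, map_pow]
  have hdeg : (stmt14_p.map φ).natDegree = 2 := by
    rw [hmap]
    exact Polynomial.natDegree_quadratic (pow_ne_zero _ hφX0)
  rw [Polynomial.irreducible_iff_roots_eq_zero_of_degree_le_three (by omega) (by omega)]
  by_contra hroots
  obtain ⟨z₀, hz₀⟩ := Multiset.exists_mem_of_ne_zero hroots
  have hmapne : stmt14_p.map φ ≠ 0 := fun hz => by simp [hz] at hdeg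
  have hroot : (stmt14_p.map φ).IsRoot z₀ := (Polynomial.mem_roots hmapne).mp hz₀
  have heval : φ (X 0) ^ 3 * z₀ ^ 2 + φ (X 0) * φ (X 1) ^ 3 * z₀
      + (φ (X 0) ^ 5 + φ (X 1) ^ 5) = 0 := by
    have h := hroot
    rw [hmap] at h
    simpa [Polynomial.IsRoot, Polynomial.eval_add, Polynomial.eval_mul] using h
  have hint : IsIntegral (MvPolynomial (Fin 2) ℂ) (φ (X 0) ^ 3 * z₀) := by
    refine ⟨Polynomial.X ^ 2 + (Polynomial.C (X 0 * X 1 ^ 3) * Polynomial.X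
      + Polynomial.C (X 0 ^ 8 + X 0 ^ 3 * X 1 ^ 5)), ?_, ?_⟩
    · exact Polynomial.monic_X_pow_add
        (lt_of_le_of_lt Polynomial.degree_linear_le (by norm_num))
    · simp only [Polynomial.eval₂_add, Polynomial.eval₂_mul, Polynomial.eval₂_pow,
        Polynomial.eval₂_X, Polynomial.eval₂_C, map_add, map_mul, map_pow]
      linear_combination (φ (X 0) ^ 3) * heval
  obtain ⟨v, hv⟩ := IsIntegrallyClosed.isIntegral_iff.mp hint
  rw [← hφ] at hv
  refine stmt14_no_root v ?_
  apply hinj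
  rw [map_zero]
  simp only [map_add, map_mul, map_pow, hv]
  linear_combination (φ (X 0) ^ 3) * heval

lemma stmt14_p_irred : Irreducible stmt14_p := by
  letI : NormalizationMonoid (MvPolynomial (Fin 2) ℂ) :=
    UniqueFactorizationMonoid.normalizationMonoid.toNormalizationMonoid
  letI : NormalizedGCDMonoid (MvPolynomial (Fin 2) ℂ) :=
    UniqueFactorizationMonoid.toNormalizedGCDMonoid _
  have hprim : stmt14_p.IsPrimitive := by
    intro r hr
    rw [Polynomial.C_dvd_iff_dvd_coeff] at hr
    have hc2 : r ∣ (X 0 : MvPolynomial (Fin 2) ℂ) ^ 3 := by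
      have := hr 2
      simp only [stmt14_p, Polynomial.coeff_add, Polynomial.coeff_C_mul,
        Polynomial.coeff_X_pow, Polynomial.coeff_C, Polynomial.coeff_X] at this
      norm_num at this
      exact this
    have hc0 : r ∣ (X 0 : MvPolynomial (Fin 2) ℂ) ^ 5 + X 1 ^ 5 := by
      have := hr 0
      simp only [stmt14_p, Polynomial.coeff_add, Polynomial.coeff_C_mul,
        Polynomial.coeff_X_pow, Polynomial.coeff_C, Polynomial.coeff_X] at this
      norm_num at this
      exact this
    rcases (dvd_prime_pow stmt14_prime_X0 3).mp hc2 with ⟨i, hi, hassoc⟩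
    rcases Nat.eq_zero_or_pos i with rfl | hipos
    · rw [pow_zero] at hassoc
      exact hassoc.symm.isUnit isUnit_one
    · exfalso
      have hXr : (X 0 : MvPolynomial (Fin 2) ℂ) ∣ r :=
        (dvd_pow_self (X 0 : MvPolynomial (Fin 2) ℂ) hipos.ne').trans hassoc.symm.dvd
      have h1 : (X 0 : MvPolynomial (Fin 2) ℂ) ∣ X 0 ^ 5 + X 1 ^ 5 := hXr.trans hc0
      have h2 : (X 0 : MvPolynomial (Fin 2) ℂ) ∣ X 1 ^ 5 :=
        (dvd_add_right (dvd_pow_self _ (by norm_num))).mp h1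
      exact stmt14_X0_not_dvd_X1 (stmt14_prime_X0.dvd_of_dvd_pow h2)
  exact (hprim.irreducible_iff_irreducible_map_fraction_map
    (K := FractionRing (MvPolynomial (Fin 2) ℂ))).mpr stmt14_map_irred

lemma stmt14_eq :
    (MvPolynomial.finSuccEquiv ℂ 2)
      ((renameEquiv ℂ (Equiv.swap (0 : Fin 3) 2))
        ((X 0 : MvPolynomial (Fin 3) ℂ) ^ 5 + X 1 ^ 5
          + X 1 * X 2 * (X 0 ^ 3 + X 1 ^ 2 * X 2))) = stmt14_p := by
  have e0 : (Equiv.swap (0 : Fin 3) 2) 0 = 2 := Equiv.swap_apply_left 0 2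
  have e2 : (Equiv.swap (0 : Fin 3) 2) 2 = 0 := Equiv.swap_apply_right 0 2
  have e1 : (Equiv.swap (0 : Fin 3) 2) 1 = 1 :=
    Equiv.swap_apply_of_ne_of_ne (by decide) (by decide)
  have s1 : (X (1 : Fin 3) : MvPolynomial (Fin 3) ℂ) = X (Fin.succ 0) := rfl
  have s2 : (X (2 : Fin 3) : MvPolynomial (Fin 3) ℂ) = X (Fin.succ 1) := rfl
  simp only [map_add, map_mul, map_pow, renameEquiv_apply, rename_X, e0, e1, e2]
  simp only [s1, s2, finSuccEquiv_X_zero, finSuccEquiv_X_succ, stmt14_p]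
  simp only [map_add, map_mul, map_pow]
  ring

/-- The quintic `f = x⁵ + y⁵ + yz(x³ + y²z)` is an irreducible polynomial, i.e. the
curve `C : f = 0` in `ℙ²(ℂ)` is irreducible. -/
theorem stmt14 (f : MvPolynomial (Fin 3) ℂ)
    (hf : f = X 0 ^ 5 + X 1 ^ 5 + X 1 * X 2 * (X 0 ^ 3 + X 1 ^ 2 * X 2)) :
    Irreducible f := by
  subst hf
  have h1 : Irreducible ((renameEquiv ℂ (Equiv.swap (0 : Fin 3) 2))
      ((X 0 : MvPolynomial (Fin 3) ℂ) ^ 5 + X 1 ^ 5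
        + X 1 * X 2 * (X 0 ^ 3 + X 1 ^ 2 * X 2))) := by
    refine (MulEquiv.irreducible_iff (MvPolynomial.finSuccEquiv ℂ 2).toMulEquiv).mp ?_
    show Irreducible ((MvPolynomial.finSuccEquiv ℂ 2) _)
    rw [stmt14_eq]
    exact stmt14_p_irred
  exact (MulEquiv.irreducible_iff (renameEquiv ℂ (Equiv.swap (0 : Fin 3) 2)).toMulEquiv).mp h1
end

section
/- Let j ≥ 3 and f = x^j y^j + y^j z^j + x^j z^j. The Jacobian ideal localization argument: any homogeneous polynomial h of degree 2j-3 such that, at each of the three points (0:0:1), (0:1:0), (1:0:0), the localization of h lies in the local ideal generated by the (j-1)-st powers of the two local coordinates, must be zero. Consequently I_{f,2j-3} = 0, where I_f is the saturation of the Jacobian ideal. -/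
open MvPolynomial

private lemma deg3 (m : Fin 3 →₀ ℕ) : Finsupp.degree m = m 0 + m 1 + m 2 := by
  rw [Finsupp.degree, ← Fin.sum_univ_three (fun i => m i)]
  exact Finset.sum_subset (Finset.subset_univ _)
    (fun i _ hi => Finsupp.notMem_support_iff.mp hi)

private lemma coeff_span_pow (k : ℕ) (p : MvPolynomial (Fin 2) ℂ)
    (hp : p ∈ Ideal.span {(X 0 : MvPolynomial (Fin 2) ℂ) ^ k, X 1 ^ k})
    (n : Fin 2 →₀ ℕ) (h0 : n 0 < k) (h1 : n 1 < k) : coeff n p = 0 := by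
  rw [Ideal.mem_span_pair] at hp
  obtain ⟨a, b, rfl⟩ := hp
  rw [coeff_add, X_pow_eq_monomial, X_pow_eq_monomial, coeff_mul_monomial',
    coeff_mul_monomial', if_neg, if_neg, add_zero]
  · rw [Finsupp.single_le_iff]; omega
  · rw [Finsupp.single_le_iff]; omega

private lemma coeff_sat (k : ℕ) (s p : MvPolynomial (Fin 2) ℂ)
    (hs : coeff 0 s ≠ 0)
    (hsp : s * p ∈ Ideal.span {(X 0 : MvPolynomial (Fin 2) ℂ) ^ k, X 1 ^ k}) :
    ∀ n : Fin 2 →₀ ℕ, n 0 < k → n 1 < k → coeff n p = 0 := by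
  suffices H : ∀ N, ∀ n : Fin 2 →₀ ℕ, n 0 + n 1 = N → n 0 < k → n 1 < k → coeff n p = 0 by
    intro n; exact H _ n rfl
  intro N
  induction N using Nat.strong_induction_on with
  | _ N ih =>
    intro n hN h0 h1
    have hz : coeff n (s * p) = 0 := coeff_span_pow k _ hsp n h0 h1
    rw [coeff_mul, Finset.sum_eq_single ((0 : Fin 2 →₀ ℕ), n)] at hz
    · have : coeff 0 s * coeff n p = 0 := hz
      rcases mul_eq_zero.mp this with h | h
      · exact absurd h hs
      · exact h
    · rintro ⟨u, v⟩ hx hne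
      have hx' : u + v = n := Finset.HasAntidiagonal.mem_antidiagonal.mp hx
      have hu : u ≠ 0 := by
        rintro rfl
        rw [zero_add] at hx'
        exact hne (Prod.ext rfl hx')
      obtain ⟨i, hi⟩ := Finsupp.ne_iff.mp hu
      have e0 : u 0 + v 0 = n 0 := by rw [← hx']; simp
      have e1 : u 1 + v 1 = n 1 := by rw [← hx']; simp
      have hex : ∃ i : Fin 2, u i ≠ 0 := ⟨i, by simpa using hi⟩
      have hi' : u 0 ≠ 0 ∨ u 1 ≠ 0 := Fin.exists_fin_two.mp hex
      have := ih (v 0 + v 1) (by omega) v rfl (by omega) (by omega)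
      simp [this]
    · intro hmem
      exact absurd (Finset.HasAntidiagonal.mem_antidiagonal.mpr (zero_add n)) hmem

private lemma support_bound (k : ℕ) (h : MvPolynomial (Fin 3) ℂ)
    (v : Fin 3 → MvPolynomial (Fin 2) ℂ)
    (g : (Fin 3 →₀ ℕ) → (Fin 2 →₀ ℕ))
    (hmon : ∀ (m : Fin 3 →₀ ℕ) (c : ℂ), aeval v (monomial m c) = monomial (g m) c)
    (hginj : ∀ m ∈ h.support, ∀ m' ∈ h.support, g m = g m' → m = m')
    (s : MvPolynomial (Fin 2) ℂ) (hs : eval ![0, 0] s ≠ 0)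
    (hsp : s * aeval v h ∈ Ideal.span {(X 0 : MvPolynomial (Fin 2) ℂ) ^ k, X 1 ^ k}) :
    ∀ m ∈ h.support, k ≤ g m 0 ∨ k ≤ g m 1 := by
  intro m hm
  by_contra hcon
  push_neg at hcon
  obtain ⟨hc0, hc1⟩ := hcon
  have hv0 : (![0, 0] : Fin 2 → ℂ) = 0 := by
    funext i; fin_cases i <;> rfl
  have hs' : coeff 0 s ≠ 0 := by
    rwa [hv0, eval_zero] at hs
  have hz : coeff (g m) (aeval v h) = 0 := coeff_sat k s _ hs' hsp (g m) hc0 hc1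
  have heq : aeval v h = ∑ m' ∈ h.support, monomial (g m') (coeff m' h) := by
    conv_lhs => rw [h.as_sum]
    rw [map_sum]
    exact Finset.sum_congr rfl fun m' _ => hmon m' _
  rw [heq, coeff_sum] at hz
  rw [Finset.sum_eq_single m] at hz
  · simp only [coeff_monomial, if_pos rfl] at hz
    exact (mem_support_iff.mp hm) hz
  · intro m' hm' hne
    simp only [coeff_monomial]
    rw [if_neg]
    intro he
    exact hne (hginj m' hm' m hm he)
  · intro hmem; exact absurd hm hmem


/-- For `f = x^j y^j + y^j z^j + x^j z^j` with `j ≥ 3`: any homogeneous polynomial `h` of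
degree `2j - 3` whose localization at each of the three singular points lies in the local
ideal generated by the `(j-1)`-st powers of the two local coordinates must vanish;
consequently `I_{f, 2j-3} = 0` for the saturation `I_f` of the Jacobian ideal. -/
theorem stmt16 (j : ℕ) (hj : 3 ≤ j)
    (h : MvPolynomial (Fin 3) ℂ)
    (hhom : h.IsHomogeneous (2 * j - 3))
    -- localization condition at (0:0:1), chart z = 1, local coordinates (x, y)
    (h₁ : ∃ s : MvPolynomial (Fin 2) ℂ, eval ![0, 0] s ≠ 0 ∧
      s * (aeval ![X 0, X 1, 1] h) ∈
        Ideal.span {(X 0 : MvPolynomial (Fin 2) ℂ) ^ (j - 1), X 1 ^ (j - 1)})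
    -- localization condition at (0:1:0), chart y = 1, local coordinates (x, z)
    (h₂ : ∃ s : MvPolynomial (Fin 2) ℂ, eval ![0, 0] s ≠ 0 ∧
      s * (aeval ![X 0, 1, X 1] h) ∈
        Ideal.span {(X 0 : MvPolynomial (Fin 2) ℂ) ^ (j - 1), X 1 ^ (j - 1)})
    -- localization condition at (1:0:0), chart x = 1, local coordinates (y, z)
    (h₃ : ∃ s : MvPolynomial (Fin 2) ℂ, eval ![0, 0] s ≠ 0 ∧
      s * (aeval ![1, X 0, X 1] h) ∈
        Ideal.span {(X 0 : MvPolynomial (Fin 2) ℂ) ^ (j - 1), X 1 ^ (j - 1)}) :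
    h = 0 := by
  -- degrees of support monomials
  have hdeg : ∀ m ∈ h.support, m 0 + m 1 + m 2 = 2 * j - 3 := by
    intro m hm
    have := hhom (mem_support_iff.mp hm)
    rw [show (1 : Fin 3 → ℕ) = fun _ => 1 from rfl, ← Finsupp.degree_eq_weight_one, deg3] at this
    exact this
  -- the three chart monomial maps
  have hmon1 : ∀ (m : Fin 3 →₀ ℕ) (c : ℂ),
      aeval (![X 0, X 1, 1] : Fin 3 → MvPolynomial (Fin 2) ℂ) (monomial m c)
        = monomial (Finsupp.single 0 (m 0) + Finsupp.single 1 (m 1)) c := by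
    intro m c
    rw [aeval_monomial, Finsupp.prod_pow, Fin.prod_univ_three]
    simp only [Matrix.cons_val_zero, Matrix.cons_val_one, Matrix.head_cons,
      Matrix.cons_val_two, Matrix.tail_cons, one_pow, mul_one]
    rw [X_pow_eq_monomial, X_pow_eq_monomial, monomial_mul, algebraMap_eq, C_mul_monomial,
      mul_one, mul_one]
  have hmon2 : ∀ (m : Fin 3 →₀ ℕ) (c : ℂ),
      aeval (![X 0, 1, X 1] : Fin 3 → MvPolynomial (Fin 2) ℂ) (monomial m c)
        = monomial (Finsupp.single 0 (m 0) + Finsupp.single 1 (m 2)) c := by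
    intro m c
    rw [aeval_monomial, Finsupp.prod_pow, Fin.prod_univ_three]
    simp only [Matrix.cons_val_zero, Matrix.cons_val_one, Matrix.head_cons,
      Matrix.cons_val_two, Matrix.tail_cons, one_pow, mul_one]
    rw [X_pow_eq_monomial, X_pow_eq_monomial, monomial_mul, algebraMap_eq, C_mul_monomial,
      mul_one, mul_one]
  have hmon3 : ∀ (m : Fin 3 →₀ ℕ) (c : ℂ),
      aeval (![1, X 0, X 1] : Fin 3 → MvPolynomial (Fin 2) ℂ) (monomial m c)
        = monomial (Finsupp.single 0 (m 1) + Finsupp.single 1 (m 2)) c := by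
    intro m c
    rw [aeval_monomial, Finsupp.prod_pow, Fin.prod_univ_three]
    simp only [Matrix.cons_val_zero, Matrix.cons_val_one, Matrix.head_cons,
      Matrix.cons_val_two, Matrix.tail_cons, one_pow, one_mul]
    rw [X_pow_eq_monomial, X_pow_eq_monomial, monomial_mul, algebraMap_eq, C_mul_monomial,
      mul_one, mul_one]
  -- evaluation of the pair maps
  have gapp : ∀ a b : ℕ,
      ((Finsupp.single (0 : Fin 2) a + Finsupp.single 1 b : Fin 2 →₀ ℕ) 0 = a)
        ∧ ((Finsupp.single (0 : Fin 2) a + Finsupp.single 1 b : Fin 2 →₀ ℕ) 1 = b) := by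
    intro a b
    constructor <;> simp [Finsupp.single_apply]
  -- injectivity lemmas
  have hext : ∀ m m' : Fin 3 →₀ ℕ, m 0 = m' 0 → m 1 = m' 1 → m 2 = m' 2 → m = m' := by
    intro m m' e0 e1 e2
    ext i; fin_cases i <;> assumption
  have pairinj : ∀ a b a' b' : ℕ,
      Finsupp.single (0 : Fin 2) a + Finsupp.single 1 b
        = Finsupp.single 0 a' + Finsupp.single 1 b' → a = a' ∧ b = b' := by
    intro a b a' b' he
    constructor
    · have := congrArg (fun f => f 0) he
      simpa [(gapp a b).1, (gapp a' b').1] using this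
    · have := congrArg (fun f => f 1) he
      simpa [(gapp a b).2, (gapp a' b').2] using this
  obtain ⟨s1, hs1, hm1⟩ := h₁
  obtain ⟨s2, hs2, hm2⟩ := h₂
  obtain ⟨s3, hs3, hm3⟩ := h₃
  have b1 := support_bound (j - 1) h _ _ hmon1
    (fun m hm m' hm' he => by
      obtain ⟨e0, e1⟩ := pairinj _ _ _ _ he
      exact hext m m' e0 e1 (by have := hdeg m hm; have := hdeg m' hm'; omega))
    s1 hs1 hm1
  have b2 := support_bound (j - 1) h _ _ hmon2
    (fun m hm m' hm' he => by
      obtain ⟨e0, e2⟩ := pairinj _ _ _ _ he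
      exact hext m m' e0 (by have := hdeg m hm; have := hdeg m' hm'; omega) e2)
    s2 hs2 hm2
  have b3 := support_bound (j - 1) h _ _ hmon3
    (fun m hm m' hm' he => by
      obtain ⟨e1, e2⟩ := pairinj _ _ _ _ he
      exact hext m m' (by have := hdeg m hm; have := hdeg m' hm'; omega) e1 e2)
    s3 hs3 hm3
  rw [← support_eq_empty, Finset.eq_empty_iff_forall_notMem]
  intro m hm
  have d := hdeg m hm
  have c1 := b1 m hm
  have c2 := b2 m hm
  have c3 := b3 m hm
  rw [(gapp (m 0) (m 1)).1, (gapp (m 0) (m 1)).2] at c1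
  rw [(gapp (m 0) (m 2)).1, (gapp (m 0) (m 2)).2] at c2
  rw [(gapp (m 1) (m 2)).1, (gapp (m 1) (m 2)).2] at c3
  omega
end
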